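/- Let φ : [0,∞) → ℝ be continuous and of exponential order a, and let v > 0 with v^α > max(a,0). Then the Sadik transform of the function t ↦ ∫₀^t φ(τ) dτ equals (1/v^α) · S[φ](v,α,β). -/

import Mathlib

open Real MeasureTheory Set Filter

/-- Sadik transform of the integral: `S[∫₀ᵗ φ] = (1/v^α) S[φ]`. -/
theorem sadik_transform_integral (φ : ℝ → ℝ) (a α β v : ℝ)
    (hφ : Continuous φ)
    (hbound : ∃ K > 0, ∀ t ≥ 0, |φ t| ≤ K * Real.exp (a * t))
    (hα : α ≠ 0) (hv : 0 < v) (hva : max a 0 < v ^ α) :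
    v ^ (-β) * ∫ t in Set.Ioi (0:ℝ),
        Real.exp (-t * v ^ α) * ∫ τ in (0:ℝ)..t, φ τ =
      (1 / v ^ α) *
        (v ^ (-β) * ∫ t in Set.Ioi (0:ℝ), Real.exp (-t * v ^ α) * φ t) := by
  obtain ⟨K, hK, hKb⟩ := hbound
  set s := v ^ α with hs_def
  have hs : 0 < s := lt_of_le_of_lt (le_max_right a 0) hva
  have hsa : a < s := lt_of_le_of_lt (le_max_left a 0) hva
  set a₀ := max a 0 with ha₀
  have ha₀0 : 0 ≤ a₀ := le_max_right a 0
  have haa₀ : a ≤ a₀ := le_max_left a 0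
  set c := s - a₀ with hc_def
  have hc : 0 < c := sub_pos.mpr hva
  set F := fun t : ℝ => ∫ τ in (0:ℝ)..t, φ τ with hF_def
  have hFderiv : ∀ t : ℝ, HasDerivAt F (φ t) t := fun t =>
    (hφ.integral_hasStrictDerivAt 0 t).hasDerivAt
  have hFcont : Continuous F := continuous_iff_continuousAt.mpr fun t => (hFderiv t).continuousAt
  -- bound on F
  have hFbound : ∀ t : ℝ, 0 ≤ t → |F t| ≤ K * Real.exp (a₀ * t) * t := by
    intro t ht
    have : ‖∫ τ in (0:ℝ)..t, φ τ‖ ≤ K * Real.exp (a₀ * t) * |t - 0| := by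
      apply intervalIntegral.norm_integral_le_of_norm_le_const
      intro x hx
      rw [Set.uIoc_of_le ht] at hx
      have hx0 : 0 ≤ x := le_of_lt hx.1
      have hxt : x ≤ t := hx.2
      have h1 : |φ x| ≤ K * Real.exp (a * x) := hKb x hx0
      have h2 : a * x ≤ a₀ * t := by
        calc a * x ≤ a₀ * x := mul_le_mul_of_nonneg_right haa₀ hx0
        _ ≤ a₀ * t := mul_le_mul_of_nonneg_left hxt ha₀0
      calc ‖φ x‖ ≤ K * Real.exp (a * x) := h1
        _ ≤ K * Real.exp (a₀ * t) := by
            exact mul_le_mul_of_nonneg_left (Real.exp_le_exp.mpr h2) hK.le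
    simpa [abs_of_nonneg ht] using this
  -- integrability of e^{-ts} φ t
  have int1 : IntegrableOn (fun t => Real.exp (-t * s) * φ t) (Ioi (0:ℝ)) := by
    have hg : IntegrableOn (fun t => K * Real.exp (-(s - a) * t)) (Ioi (0:ℝ)) :=
      (exp_neg_integrableOn_Ioi 0 (by linarith)).const_mul K
    refine hg.integrable.mono' ?_ ?_
    · exact ((Real.continuous_exp.comp (continuous_id.neg.mul continuous_const)).mul
        hφ).aestronglyMeasurable
    · rw [ae_restrict_iff' measurableSet_Ioi]
      filter_upwards with t ht
      have ht0 : 0 ≤ t := le_of_lt ht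
      have : |Real.exp (-t * s) * φ t| ≤ Real.exp (-t * s) * (K * Real.exp (a * t)) := by
        rw [abs_mul, abs_of_nonneg (Real.exp_pos _).le]
        exact mul_le_mul_of_nonneg_left (hKb t ht0) (Real.exp_pos _).le
      calc ‖Real.exp (-t * s) * φ t‖ ≤ Real.exp (-t * s) * (K * Real.exp (a * t)) := this
        _ = K * Real.exp (-(s - a) * t) := by
            rw [show Real.exp (-t * s) * (K * Real.exp (a * t)) =
              K * (Real.exp (-t * s) * Real.exp (a * t)) by ring, ← Real.exp_add]
            ring_nf
  -- integrability of e^{-ts} F t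
  have hbnd2 : ∀ t : ℝ, 0 < t →
      ‖Real.exp (-t * s) * F t‖ ≤ (K * (2 / c)) * Real.exp (-(c / 2) * t) := by
    intro t ht
    have ht0 : 0 ≤ t := le_of_lt ht
    have h1 : |Real.exp (-t * s) * F t| ≤ Real.exp (-t * s) * (K * Real.exp (a₀ * t) * t) := by
      rw [abs_mul, abs_of_nonneg (Real.exp_pos _).le]
      exact mul_le_mul_of_nonneg_left (hFbound t ht0) (Real.exp_pos _).le
    have h2 : t ≤ (2 / c) * Real.exp (c / 2 * t) := by
      have := Real.add_one_le_exp (c / 2 * t)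
      have h3 : c / 2 * t ≤ Real.exp (c / 2 * t) := by nlinarith [Real.exp_pos (c/2*t)]
      rw [div_mul_eq_mul_div, le_div_iff₀ hc]
      linarith
    calc ‖Real.exp (-t * s) * F t‖
        ≤ Real.exp (-t * s) * (K * Real.exp (a₀ * t) * t) := h1
      _ ≤ Real.exp (-t * s) * (K * Real.exp (a₀ * t) * ((2 / c) * Real.exp (c / 2 * t))) := by
          apply mul_le_mul_of_nonneg_left _ (Real.exp_pos _).le
          apply mul_le_mul_of_nonneg_left h2 (by positivity)
      _ = (K * (2 / c)) * Real.exp (-t * s + a₀ * t + c / 2 * t) := by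
          rw [Real.exp_add, Real.exp_add]; ring
      _ = (K * (2 / c)) * Real.exp (-(c / 2) * t) := by
          congr 1
          congr 1
          rw [hc_def]; ring
  have int2 : IntegrableOn (fun t => Real.exp (-t * s) * F t) (Ioi (0:ℝ)) := by
    have hg : IntegrableOn (fun t => (K * (2 / c)) * Real.exp (-(c / 2) * t)) (Ioi (0:ℝ)) :=
      (exp_neg_integrableOn_Ioi 0 (by positivity)).const_mul _
    refine hg.integrable.mono' ?_ ?_
    · exact ((Real.continuous_exp.comp (continuous_id.neg.mul continuous_const)).mul
        hFcont).aestronglyMeasurable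
    · rw [ae_restrict_iff' measurableSet_Ioi]
      filter_upwards with t ht
      exact hbnd2 t ht
  -- FTC on (0, ∞)
  set G := fun t : ℝ => Real.exp (-t * s) * F t with hG_def
  have hGderiv : ∀ t : ℝ,
      HasDerivAt G (-s * (Real.exp (-t * s) * F t) + Real.exp (-t * s) * φ t) t := by
    intro t
    have h1 : HasDerivAt (fun t : ℝ => -t * s) (-s) t := by
      simpa using ((hasDerivAt_id t).neg.mul_const s)
    have h2 : HasDerivAt (fun y => Real.exp (-y * s) * F y) _ t := (h1.exp).mul (hFderiv t)
    convert h2 using 1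
    ring
  have hGtend : Tendsto G atTop (nhds 0) := by
    have h1 : Tendsto (fun t : ℝ => -(c / 2) * t) atTop atBot :=
      (tendsto_const_mul_atBot_of_neg (by linarith : -(c / 2) < 0)).mpr tendsto_id
    have h2 : Tendsto (fun t : ℝ => (K * (2 / c)) * Real.exp (-(c / 2) * t)) atTop (nhds 0) := by
      have := (Real.tendsto_exp_atBot.comp h1).const_mul (K * (2 / c))
      simpa using this
    exact squeeze_zero_norm'
      (Filter.eventually_atTop.mpr ⟨1, fun t ht => hbnd2 t (by linarith)⟩) h2
  have hint : IntegrableOn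
      (fun t => -s * (Real.exp (-t * s) * F t) + Real.exp (-t * s) * φ t) (Ioi (0:ℝ)) :=
    (int2.const_mul (-s)).add int1
  have key : ∫ t in Ioi (0:ℝ),
      (-s * (Real.exp (-t * s) * F t) + Real.exp (-t * s) * φ t) = 0 - G 0 :=
    integral_Ioi_of_hasDerivAt_of_tendsto ((hGderiv 0).continuousAt.continuousWithinAt)
      (fun x _ => hGderiv x) hint hGtend
  have hG0 : G 0 = 0 := by simp [hG_def, hF_def]
  rw [hG0, sub_zero] at key
  rw [integral_add (int2.const_mul (-s)) int1, MeasureTheory.integral_const_mul] at key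
  have hIφ : ∫ t in Ioi (0:ℝ), Real.exp (-t * s) * φ t
      = s * ∫ t in Ioi (0:ℝ), G t := by linarith
  rw [hIφ]
  field_simp
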